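/- arXiv:1601.03754 — 4 statements merged into one kernel-verified Lean document; each statement's English description precedes it below -/
import Mathlib

section
/- Let p ∈ X with current owner c_j (meaning d(p, c_j) ≤ d(p, c) for all centroids c), and suppose after an update each centroid c_i moves to c_i' with d(c_i, c_i') ≤ m_i. If d(p, c_j) + m_j < min_{k ≠ j} d(p, c_k) - max_i m_i, then c_j' is the unique nearest updated centroid to p: d(p, c_j') < d(p, c_k') for all k ≠ j. -/
theorem stmt_2 {X : Type*} [MetricSpace X] {ι : Type*} [Fintype ι] [DecidableEq ι] [Nonempty ι]
    (c c' : ι → X) (m : ι → ℝ) (p : X) (j : ι)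
    (hne : (Finset.univ.erase j).Nonempty)
    (hm : ∀ i, dist (c i) (c' i) ≤ m i)
    (howner : ∀ i, dist p (c j) ≤ dist p (c i))
    (h : dist p (c j) + m j <
      (Finset.univ.erase j).inf' hne (fun k => dist p (c k)) -
        Finset.univ.sup' Finset.univ_nonempty m) :
    ∀ k ≠ j, dist p (c' j) < dist p (c' k) := by
  intro k hk
  have h1 : dist p (c' j) ≤ dist p (c j) + m j :=
    le_trans (dist_triangle p (c j) (c' j)) (by linarith [hm j])
  have h2 : (Finset.univ.erase j).inf' hne (fun k => dist p (c k)) ≤ dist p (c k) :=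
    Finset.inf'_le _ (Finset.mem_erase.2 ⟨hk, Finset.mem_univ k⟩)
  have h3 : m k ≤ Finset.univ.sup' Finset.univ_nonempty m :=
    Finset.le_sup' _ (Finset.mem_univ k)
  have h4 : dist p (c k) ≤ dist p (c' k) + m k := by
    have := dist_triangle p (c' k) (c k)
    have := hm k
    rw [dist_comm (c k) (c' k)] at this
    linarith
  linarith
end

section
/- If u ≥ max_{q ∈ D} d(q, c_q), where c_q denotes the nearest centroid in C to q, and d_min(D, R) > u for a subset R ⊆ C, then every point q ∈ D has the same nearest centroid in C as in C \ R. -/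
theorem stmt_5 {X : Type*} [MetricSpace X] [DecidableEq X]
    (D C R : Finset X) (hD : D.Nonempty) (hC : C.Nonempty)
    (hRC : R ⊆ C) (hCR : (C \ R).Nonempty) (u : ℝ)
    (hu : ∀ q ∈ D, C.inf' hC (fun cc => dist q cc) ≤ u)
    (hmin : ∀ q ∈ D, ∀ r ∈ R, u < dist q r) :
    ∀ q ∈ D, C.inf' hC (fun cc => dist q cc)
      = (C \ R).inf' hCR (fun cc => dist q cc) := by
  intro q hq
  apply le_antisymm
  · exact Finset.inf'_mono _ (Finset.sdiff_subset) hCR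
  · obtain ⟨c, hc, hcmin⟩ := Finset.exists_mem_eq_inf' hC (fun cc => dist q cc)
    have hcR : c ∉ R := by
      intro hcR
      have h1 := hmin q hq c hcR
      have h2 := hu q hq
      rw [hcmin] at h2
      linarith
    exact Finset.inf'_le _ (Finset.mem_sdiff.mpr ⟨hc, hcR⟩) |>.trans hcmin.ge
end

section
/- Let p have owner c_j among centroids C (d(p, c_j) ≤ d(p, c) for all c ∈ C), let each c_i move to c_i' with d(c_i, c_i') ≤ m_i, ℓ a lower bound with ℓ ≤ d(p, c_k) for all k ≠ j, and u ≥ d(p, c_j). If max(ℓ − max_i m_i, min_{k ≠ j} d(c_k', c_j')/2) > u + m_j, then d(p, c_j') < d(p, c_k') for all k ≠ j. -/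
theorem stmt_9 {X : Type*} [MetricSpace X] {ι : Type*} [Fintype ι] [DecidableEq ι]
    (c c' : ι → X) (m : ι → ℝ) (hm0 : ∀ i, 0 ≤ m i) (p : X) (j : ι)
    (hne : (Finset.univ.erase j).Nonempty)
    (u ℓ : ℝ)
    (howner : ∀ i, dist p (c j) ≤ dist p (c i))
    (hmove : ∀ i, dist (c i) (c' i) ≤ m i)
    (hℓ : ∀ k ≠ j, ℓ ≤ dist p (c k))
    (hu : dist p (c j) ≤ u)
    (h : max (ℓ - Finset.univ.sup' ⟨j, Finset.mem_univ j⟩ m)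
          ((Finset.univ.erase j).inf' hne (fun k => dist (c' k) (c' j)) / 2)
        > u + m j) :
    ∀ k ≠ j, dist p (c' j) < dist p (c' k) := by
  intro k hk
  have hpj' : dist p (c' j) ≤ u + m j :=
    le_trans (dist_triangle p (c j) (c' j)) (add_le_add hu (hmove j))
  have hlow : dist p (c k) - m k ≤ dist p (c' k) := by
    have := dist_triangle p (c' k) (c k)
    have h2 : dist (c' k) (c k) ≤ m k := by rw [dist_comm]; exact hmove k
    linarith
  rcases lt_max_iff.mp h with h1 | h2
  · have hsup : m k ≤ Finset.univ.sup' ⟨j, Finset.mem_univ j⟩ m :=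
      Finset.le_sup' m (Finset.mem_univ k)
    have := hℓ k hk
    linarith
  · have hinf : (Finset.univ.erase j).inf' hne (fun k => dist (c' k) (c' j))
        ≤ dist (c' k) (c' j) :=
      Finset.inf'_le _ (Finset.mem_erase.mpr ⟨hk, Finset.mem_univ k⟩)
    have htri : dist (c' k) (c' j) ≤ dist (c' k) p + dist p (c' j) :=
      dist_triangle _ _ _
    rw [dist_comm (c' k) p] at htri
    linarith
end

section
/- Suppose every point of D has the same nearest centroid c_j among C at the current iteration, ub ≥ max_{q∈D} d(q, c_j), lb ≤ min_{q∈D} min_{k≠j} d(q, c_k), each centroid c_i moves to c_i' with d(c_i, c_i') ≤ m_i, and ub + m_j < lb − max_i m_i. Then every point of D has unique nearest updated centroid c_j'. -/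
theorem stmt_16 {X : Type*} [MetricSpace X] {K : ℕ} (hK : 2 ≤ K)
    (D : Set X) (hD : D.Nonempty)
    (c c' : Fin K → X) (m : Fin K → ℝ) (hm0 : ∀ i, 0 ≤ m i)
    (j : Fin K) (ub lb : ℝ)
    (hown : ∀ q ∈ D, ∀ k, dist q (c j) ≤ dist q (c k))
    (hub : ∀ q ∈ D, dist q (c j) ≤ ub)
    (hlb : ∀ q ∈ D, ∀ k ≠ j, lb ≤ dist q (c k))
    (hmove : ∀ i, dist (c i) (c' i) ≤ m i)
    (h : ub + m j < lb - Finset.univ.sup' ⟨j, Finset.mem_univ j⟩ m) :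
    ∀ q ∈ D, ∀ k ≠ j, dist q (c' j) < dist q (c' k) := by
  intro q hq k hk
  have h1 : dist q (c' j) ≤ dist q (c j) + m j :=
    (dist_triangle q (c j) (c' j)).trans (by linarith [hmove j])
  have hsup : m k ≤ Finset.univ.sup' ⟨j, Finset.mem_univ j⟩ m :=
    Finset.le_sup' m (Finset.mem_univ k)
  have h2 : dist q (c k) - m k ≤ dist q (c' k) := by
    have := dist_triangle q (c' k) (c k)
    have := hmove k
    rw [dist_comm (c k) (c' k)] at this
    linarith
  have := hub q hq
  have := hlb q hq k hk
  linarith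
end
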